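/- If Q₁, Q₂ are orthogonal projections with nonzero ranges 𝔔₁, 𝔔₂, and φ(𝔔₁,𝔔₂) ∈ [0,π/2] is defined by sin φ(𝔔₁,𝔔₂) = sup_{x∈𝔔₁, ‖x‖=1} dist(x, 𝔔₂), then arcsin(‖Q₁ − Q₂‖) = max{φ(𝔔₁,𝔔₂), φ(𝔔₂,𝔔₁)}. -/

import Mathlib

open Real ContinuousLinearMap

section Aux

variable {E : Type*} [NormedAddCommGroup E] [InnerProductSpace ℂ E] [CompleteSpace E]

private noncomputable def projL (K : Submodule ℂ E) [CompleteSpace K] : E →L[ℂ] E :=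
  K.subtypeL ∘L K.orthogonalProjection

private lemma projL_apply (K : Submodule ℂ E) [CompleteSpace K] (x : E) :
    projL K x = (K.orthogonalProjection x : E) := rfl

private lemma projL_mem (K : Submodule ℂ E) [CompleteSpace K] (x : E) : projL K x ∈ K :=
  (K.orthogonalProjection x).2

private lemma projL_of_mem {K : Submodule ℂ E} [CompleteSpace K] {x : E} (h : x ∈ K) :
    projL K x = x := Submodule.starProjection_eq_self_iff.2 h

private lemma sub_projL_mem (K : Submodule ℂ E) [CompleteSpace K] (x : E) :
    x - projL K x ∈ Kᗮ := Submodule.sub_starProjection_mem_orthogonal x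

private lemma projL_pythag (K : Submodule ℂ E) [CompleteSpace K] (x : E) :
    ‖projL K x‖ * ‖projL K x‖ + ‖x - projL K x‖ * ‖x - projL K x‖ = ‖x‖ * ‖x‖ := by
  have h0 : (inner ℂ (projL K x) (x - projL K x) : ℂ) = 0 :=
    Submodule.inner_right_of_mem_orthogonal (projL_mem K x) (sub_projL_mem K x)
  have h := norm_add_sq_eq_norm_sq_add_norm_sq_of_inner_eq_zero (𝕜 := ℂ)
    (projL K x) (x - projL K x) h0
  have he : projL K x + (x - projL K x) = x := by abel
  rw [he] at h
  linarith

private lemma norm_projL_le (K : Submodule ℂ E) [CompleteSpace K] (x : E) :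
    ‖projL K x‖ ≤ ‖x‖ := by
  nlinarith [projL_pythag K x, norm_nonneg (projL K x), norm_nonneg x,
    norm_nonneg (x - projL K x)]

private lemma projL_infDist (K : Submodule ℂ E) [CompleteSpace K] (x : E) :
    Metric.infDist x (K : Set E) = ‖x - projL K x‖ := by
  rw [Metric.infDist_eq_iInf, show projL K x = K.starProjection x from rfl,
    Submodule.starProjection_minimal]
  simp_rw [dist_eq_norm]
  rfl

/-- The sup of distances from unit vectors of `K₁` to `K₂` equals `‖(1-Q₂) Q₁‖`. -/
private lemma sup_infDist_eq (K₁ K₂ : Submodule ℂ E) [CompleteSpace K₁] [CompleteSpace K₂]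
    (hK₁ : K₁ ≠ ⊥) :
    sSup ((fun x => Metric.infDist x (K₂ : Set E)) '' {x : E | x ∈ K₁ ∧ ‖x‖ = 1}) =
      ‖(1 - projL K₂) ∘L projL K₁‖ := by
  set T : E →L[ℂ] E := (1 - projL K₂) ∘L projL K₁ with hT
  set S := (fun x => Metric.infDist x (K₂ : Set E)) '' {x : E | x ∈ K₁ ∧ ‖x‖ = 1} with hS
  -- a unit vector in K₁
  obtain ⟨z, hz, hz0⟩ := (Submodule.ne_bot_iff K₁).1 hK₁
  have hzn : ‖z‖ ≠ 0 := norm_ne_zero_iff.2 hz0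
  set u : E := ((‖z‖ : ℂ))⁻¹ • z with hu'
  have hu : u ∈ K₁ := K₁.smul_mem _ hz
  have hu1 : ‖u‖ = 1 := by
    rw [hu', norm_smul, norm_inv]
    simp only [Complex.norm_real, norm_norm]
    field_simp
  have hne : S.Nonempty := ⟨_, ⟨u, ⟨hu, hu1⟩, rfl⟩⟩
  -- each element of S is bounded by ‖T‖
  have hub : ∀ r ∈ S, r ≤ ‖T‖ := by
    rintro r ⟨x, ⟨hx, hx1⟩, rfl⟩
    have hTx : T x = x - projL K₂ x := by
      simp [hT, ContinuousLinearMap.comp_apply, projL_of_mem hx,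
        ContinuousLinearMap.sub_apply, ContinuousLinearMap.one_apply]
    calc Metric.infDist x (K₂ : Set E) = ‖T x‖ := by rw [projL_infDist, hTx]
      _ ≤ ‖T‖ * ‖x‖ := T.le_opNorm x
      _ = ‖T‖ := by rw [hx1, mul_one]
  have hbdd : BddAbove S := ⟨‖T‖, hub⟩
  have hSnn : 0 ≤ sSup S := le_trans (Metric.infDist_nonneg) (le_csSup hbdd ⟨u, ⟨hu, hu1⟩, rfl⟩)
  refine le_antisymm (csSup_le hne hub) ?_
  refine opNorm_le_bound _ hSnn fun x => ?_
  set y := projL K₁ x with hy'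
  have hy : y ∈ K₁ := projL_mem K₁ x
  have hyx : ‖y‖ ≤ ‖x‖ := norm_projL_le K₁ x
  have hTx : T x = y - projL K₂ y := by
    simp [hT, ContinuousLinearMap.comp_apply, ContinuousLinearMap.sub_apply,
      ContinuousLinearMap.one_apply, hy']
  by_cases hy0 : y = 0
  · rw [hTx, hy0]
    simpa using mul_nonneg hSnn (norm_nonneg x)
  · have hyn : ‖y‖ ≠ 0 := norm_ne_zero_iff.2 hy0
    set v : E := ((‖y‖ : ℂ))⁻¹ • y with hv'
    have hv : v ∈ K₁ := K₁.smul_mem _ hy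
    have hv1 : ‖v‖ = 1 := by
      rw [hv', norm_smul, norm_inv]
      simp only [Complex.norm_real, norm_norm]
      field_simp
    have hmem : Metric.infDist v (K₂ : Set E) ≤ sSup S :=
      le_csSup hbdd ⟨v, ⟨hv, hv1⟩, rfl⟩
    have hvd : Metric.infDist v (K₂ : Set E) = ‖y‖⁻¹ * ‖y - projL K₂ y‖ := by
      rw [projL_infDist]
      have : v - projL K₂ v = ((‖y‖ : ℂ))⁻¹ • (y - projL K₂ y) := by
        rw [hv', map_smul, smul_sub]
      rw [this, norm_smul, norm_inv]
      simp only [Complex.norm_real, norm_norm]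
    have key : ‖y - projL K₂ y‖ ≤ sSup S * ‖y‖ := by
      rw [hvd] at hmem
      have := mul_le_mul_of_nonneg_right hmem (norm_nonneg y)
      rwa [mul_comm (‖y‖⁻¹) _, mul_assoc, inv_mul_cancel₀ hyn, mul_one] at this
    calc ‖T x‖ = ‖y - projL K₂ y‖ := by rw [hTx]
      _ ≤ sSup S * ‖y‖ := key
      _ ≤ sSup S * ‖x‖ := mul_le_mul_of_nonneg_left hyx hSnn

private lemma isSelfAdjoint_projL (K : Submodule ℂ E) [CompleteSpace K] :
    IsSelfAdjoint (projL K) := isSelfAdjoint_starProjection K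

/-- ‖P - Q‖ = max ‖(1-Q)P‖ ‖(1-P)Q‖ for orthogonal projections. -/
private lemma norm_sub_projL_eq_max (K₁ K₂ : Submodule ℂ E)
    [CompleteSpace K₁] [CompleteSpace K₂] :
    ‖projL K₁ - projL K₂‖ =
      max ‖(1 - projL K₂) ∘L projL K₁‖ ‖(1 - projL K₁) ∘L projL K₂‖ := by
  set P := projL K₁ with hP'
  set Q := projL K₂ with hQ'
  -- adjoint fact: ‖P ∘L (1 - Q)‖ = ‖(1 - Q) ∘L P‖
  have hPsa : IsSelfAdjoint P := isSelfAdjoint_projL K₁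
  have hQsa : IsSelfAdjoint Q := isSelfAdjoint_projL K₂
  have h1Q : IsSelfAdjoint (1 - Q : E →L[ℂ] E) := (IsSelfAdjoint.one _).sub hQsa
  have hadj : ‖P ∘L (1 - Q)‖ = ‖(1 - Q) ∘L P‖ := by
    calc ‖P ∘L (1 - Q)‖ = ‖adjoint (P ∘L (1 - Q))‖ :=
          (ContinuousLinearMap.adjoint.norm_map _).symm
      _ = ‖adjoint (1 - Q) ∘L adjoint P‖ := by rw [adjoint_comp]
      _ = ‖(1 - Q) ∘L P‖ := by
          rw [← ContinuousLinearMap.star_eq_adjoint, ← ContinuousLinearMap.star_eq_adjoint,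
            hPsa.star_eq, h1Q.star_eq]
  -- lower bounds
  have l1 : ‖(1 - Q) ∘L P‖ ≤ ‖P - Q‖ := by
    refine opNorm_le_bound _ (norm_nonneg _) fun x => ?_
    have he : ((1 - Q) ∘L P) x = (P - Q) (P x) := by
      simp [ContinuousLinearMap.comp_apply, ContinuousLinearMap.sub_apply,
        ContinuousLinearMap.one_apply, hP', projL_of_mem (projL_mem K₁ x)]
    rw [he]
    calc ‖(P - Q) (P x)‖ ≤ ‖P - Q‖ * ‖P x‖ := (P - Q).le_opNorm _
      _ ≤ ‖P - Q‖ * ‖x‖ := mul_le_mul_of_nonneg_left (norm_projL_le K₁ x) (norm_nonneg _)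
  have l2 : ‖(1 - P) ∘L Q‖ ≤ ‖P - Q‖ := by
    refine opNorm_le_bound _ (norm_nonneg _) fun x => ?_
    have he : ((1 - P) ∘L Q) x = (Q - P) (Q x) := by
      simp [ContinuousLinearMap.comp_apply, ContinuousLinearMap.sub_apply,
        ContinuousLinearMap.one_apply, hQ', projL_of_mem (projL_mem K₂ x)]
    rw [he]
    calc ‖(Q - P) (Q x)‖ ≤ ‖Q - P‖ * ‖Q x‖ := (Q - P).le_opNorm _
      _ ≤ ‖P - Q‖ * ‖x‖ := by
          rw [norm_sub_rev]
          exact mul_le_mul_of_nonneg_left (norm_projL_le K₂ x) (norm_nonneg _)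
  refine le_antisymm ?_ (max_le l1 l2)
  -- upper bound
  set m := max ‖(1 - Q) ∘L P‖ ‖(1 - P) ∘L Q‖ with hm
  have hm0 : 0 ≤ m := le_trans (norm_nonneg _) (le_max_left _ _)
  refine opNorm_le_bound _ hm0 fun x => ?_
  set a : E := P (x - Q x) with ha'
  set b : E := Q x - P (Q x) with hb'
  have hab : (P - Q) x = a - b := by
    simp only [ha', hb', ContinuousLinearMap.sub_apply, map_sub]
    abel
  have hinner : (inner ℂ a b : ℂ) = 0 :=
    Submodule.inner_right_of_mem_orthogonal (projL_mem K₁ _) (sub_projL_mem K₁ (Q x))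
  have hpyth : ‖a - b‖ * ‖a - b‖ = ‖a‖ * ‖a‖ + ‖b‖ * ‖b‖ := by
    have h := norm_add_sq_eq_norm_sq_add_norm_sq_of_inner_eq_zero (𝕜 := ℂ) a (-b)
      (by rw [inner_neg_right, hinner, neg_zero])
    simpa [sub_eq_add_neg] using h
  -- bound ‖a‖ via ‖P ∘ (1-Q)‖ applied to (1-Q)x
  have hQQ : Q (x - Q x) = 0 := by
    simp [map_sub, hQ', projL_of_mem (projL_mem K₂ x)]
  have haa : a = (P ∘L (1 - Q)) (x - Q x) := by
    simp [ha', ContinuousLinearMap.comp_apply, ContinuousLinearMap.sub_apply,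
      ContinuousLinearMap.one_apply, hQQ]
  have hA : ‖a‖ ≤ m * ‖x - Q x‖ := by
    rw [haa]
    calc ‖(P ∘L (1 - Q)) (x - Q x)‖ ≤ ‖P ∘L (1 - Q)‖ * ‖x - Q x‖ := le_opNorm _ _
      _ ≤ m * ‖x - Q x‖ := by
          apply mul_le_mul_of_nonneg_right _ (norm_nonneg _)
          rw [hadj]; exact le_max_left _ _
  -- bound ‖b‖ via ‖(1-P) ∘ Q‖ applied to Q x
  have hQQ2 : Q (Q x) = Q x := by
    simp [hQ', projL_of_mem (projL_mem K₂ x)]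
  have hbb : b = ((1 - P) ∘L Q) (Q x) := by
    simp [hb', ContinuousLinearMap.comp_apply, ContinuousLinearMap.sub_apply,
      ContinuousLinearMap.one_apply, hQQ2]
  have hB : ‖b‖ ≤ m * ‖Q x‖ := by
    rw [hbb]
    calc ‖((1 - P) ∘L Q) (Q x)‖ ≤ ‖(1 - P) ∘L Q‖ * ‖Q x‖ := le_opNorm _ _
      _ ≤ m * ‖Q x‖ := mul_le_mul_of_nonneg_right (le_max_right _ _) (norm_nonneg _)
  have hpy2 : ‖Q x‖ * ‖Q x‖ + ‖x - Q x‖ * ‖x - Q x‖ = ‖x‖ * ‖x‖ := projL_pythag K₂ x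
  have hsq : ‖(P - Q) x‖ * ‖(P - Q) x‖ ≤ (m * ‖x‖) * (m * ‖x‖) := by
    rw [hab, hpyth]
    have h1 : ‖a‖ * ‖a‖ ≤ (m * ‖x - Q x‖) * (m * ‖x - Q x‖) :=
      mul_self_le_mul_self (norm_nonneg a) hA
    have h2 : ‖b‖ * ‖b‖ ≤ (m * ‖Q x‖) * (m * ‖Q x‖) :=
      mul_self_le_mul_self (norm_nonneg b) hB
    have h3 : m * ‖x - Q x‖ * (m * ‖x - Q x‖) + m * ‖Q x‖ * (m * ‖Q x‖) =
        m * ‖x‖ * (m * ‖x‖) := by linear_combination (m * m) * hpy2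
    linarith [h1, h2, h3]
  exact nonneg_le_nonneg_of_sq_le_sq (mul_nonneg hm0 (norm_nonneg x)) hsq

end Aux

/-- The maximal angle arcsin ‖Q₁ − Q₂‖ between two nonzero subspaces equals the maximum of
the two relative maximal angles φ(𝔔₁,𝔔₂) and φ(𝔔₂,𝔔₁), where
sin φ(𝔔₁,𝔔₂) = sup over unit vectors x ∈ 𝔔₁ of dist(x, 𝔔₂). -/
theorem maximal_angle_eq_max_relative_angles {E : Type*} [NormedAddCommGroup E]
    [InnerProductSpace ℂ E] [CompleteSpace E]
    (K₁ K₂ : Submodule ℂ E) [CompleteSpace K₁] [CompleteSpace K₂]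
    (hK₁ : K₁ ≠ ⊥) (hK₂ : K₂ ≠ ⊥)
    (Q₁ Q₂ : E →L[ℂ] E)
    (hQ₁ : Q₁ = K₁.subtypeL ∘L K₁.orthogonalProjection)
    (hQ₂ : Q₂ = K₂.subtypeL ∘L K₂.orthogonalProjection)
    (φ₁₂ φ₂₁ : ℝ)
    (hφ₁₂mem : φ₁₂ ∈ Set.Icc 0 (π / 2))
    (hφ₂₁mem : φ₂₁ ∈ Set.Icc 0 (π / 2))
    (hφ₁₂ : Real.sin φ₁₂ =
      sSup ((fun x => Metric.infDist x (K₂ : Set E)) '' {x : E | x ∈ K₁ ∧ ‖x‖ = 1}))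
    (hφ₂₁ : Real.sin φ₂₁ =
      sSup ((fun y => Metric.infDist y (K₁ : Set E)) '' {y : E | y ∈ K₂ ∧ ‖y‖ = 1})) :
    Real.arcsin ‖Q₁ - Q₂‖ = max φ₁₂ φ₂₁ := by
  have hQ₁' : Q₁ = projL K₁ := hQ₁
  have hQ₂' : Q₂ = projL K₂ := hQ₂
  have h12 : Real.sin φ₁₂ = ‖(1 - projL K₂) ∘L projL K₁‖ := by
    rw [hφ₁₂, sup_infDist_eq K₁ K₂ hK₁]
  have h21 : Real.sin φ₂₁ = ‖(1 - projL K₁) ∘L projL K₂‖ := by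
    rw [hφ₂₁, sup_infDist_eq K₂ K₁ hK₂]
  have hnorm : ‖Q₁ - Q₂‖ = max (Real.sin φ₁₂) (Real.sin φ₂₁) := by
    rw [hQ₁', hQ₂', norm_sub_projL_eq_max K₁ K₂, h12, h21]
  -- sin is monotone on [0, π/2]
  have hmono : MonotoneOn Real.sin (Set.Icc (-(π/2)) (π/2)) :=
    Real.strictMonoOn_sin.monotoneOn
  have hmem1 : φ₁₂ ∈ Set.Icc (-(π/2)) (π/2) :=
    ⟨le_trans (by linarith [Real.pi_pos]) hφ₁₂mem.1, hφ₁₂mem.2⟩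
  have hmem2 : φ₂₁ ∈ Set.Icc (-(π/2)) (π/2) :=
    ⟨le_trans (by linarith [Real.pi_pos]) hφ₂₁mem.1, hφ₂₁mem.2⟩
  have hmax : max (Real.sin φ₁₂) (Real.sin φ₂₁) = Real.sin (max φ₁₂ φ₂₁) := by
    rcases le_total φ₁₂ φ₂₁ with h | h
    · rw [max_eq_right h, max_eq_right (hmono hmem1 hmem2 h)]
    · rw [max_eq_left h, max_eq_left (hmono hmem2 hmem1 h)]
  rw [hnorm, hmax, Real.arcsin_sin]
  · exact le_trans (le_trans (by linarith [Real.pi_pos]) hφ₁₂mem.1) (le_max_left _ _)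
  · exact max_le hφ₁₂mem.2 hφ₂₁mem.2
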